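/- Let g be a finite-dimensional real Lie algebra with Drinfel'd double D(g) = g × g*, let {e_i} be a basis of g with dual basis {e^i}, and set r := Σ_i (0,e^i) ⊗ (e_i,0) ∈ D(g) ⊗ D(g). Define δ_D(Z) := (ad_Z⊗id + id⊗ad_Z)(r) for Z ∈ D(g), with ad taken in D(g). Then for all X ∈ g, δ_D((X,0)) = −(j⊗j)(δ(X)), where j : g → D(g), X ↦ (X,0); and for all α ∈ g*, δ_D((0,α)) = (j'⊗j')(δ'(α)), where j' : g* → D(g), α ↦ (0,α), and δ'(α) ∈ g*⊗g* is the element determined by δ'(α)(X⊗Y) = α([X,Y]) for all X,Y ∈ g. In particular δ_D maps g × {0} into (g×{0})⊗(g×{0}) and {0} × g* into ({0}×g*)⊗({0}×g*), so g is a sub-Lie bialgebra of its double. -/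

import Mathlib

open TensorProduct
set_option synthInstance.maxHeartbeats 1000000
set_option maxHeartbeats 1000000

section Helpers
variable {ι κ : Type*} {M N : Type*} [AddCommGroup M] [Module ℝ M] [AddCommGroup N] [Module ℝ N]

lemma tensor_expand [Fintype ι] [Fintype κ] (b : Module.Basis ι ℝ M) (c : Module.Basis κ ℝ N) (t : M ⊗[ℝ] N) :
    t = ∑ i : ι, ∑ j : κ,
      (TensorProduct.lid ℝ ℝ (TensorProduct.map (b.coord i) (c.coord j) t)) • (b i ⊗ₜ[ℝ] c j) := by
  induction t using TensorProduct.induction_on with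
  | zero => simp
  | tmul x y =>
      simp only [TensorProduct.map_tmul, TensorProduct.lid_tmul, smul_eq_mul]
      conv_lhs => rw [← b.sum_repr x, ← c.sum_repr y]
      rw [TensorProduct.sum_tmul]
      simp only [TensorProduct.smul_tmul', TensorProduct.tmul_sum, TensorProduct.tmul_smul,
        Module.Basis.coord_apply, smul_smul, mul_comm]
  | add u v hu hv =>
      simp only [map_add, add_smul, Finset.sum_add_distrib]
      rw [← hu, ← hv]

lemma tensor_coord_ext [Fintype ι] [Fintype κ] (b : Module.Basis ι ℝ M) (c : Module.Basis κ ℝ N)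
    {t₁ t₂ : M ⊗[ℝ] N}
    (h : ∀ i j, TensorProduct.lid ℝ ℝ (TensorProduct.map (b.coord i) (c.coord j) t₁)
      = TensorProduct.lid ℝ ℝ (TensorProduct.map (b.coord i) (c.coord j) t₂)) : t₁ = t₂ := by
  rw [tensor_expand b c t₁, tensor_expand b c t₂]
  exact Finset.sum_congr rfl fun i _ => Finset.sum_congr rfl fun j _ => by rw [h]

end Helpers

/-- For the canonical `r`-matrix `r = Σᵢ (0,eⁱ) ⊗ (eᵢ,0)` of the Drinfel'd
double `D(g) = g × g*`, the cocommutator `δ_D(Z) = (ad_Z⊗id + id⊗ad_Z)(r)` satisfies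
`δ_D((X,0)) = −(j⊗j)(δ(X))` and `δ_D((0,α)) = (j'⊗j')(δ'(α))`; in particular `δ_D` maps
`g × {0}` into `(g×{0})⊗(g×{0})` and `{0} × g*` into `({0}×g*)⊗({0}×g*)`, so `g` is a
sub-Lie bialgebra of its double. -/
theorem double_canonical_r_matrix_cocommutator
    (g : Type*) [LieRing g] [LieAlgebra ℝ g] [FiniteDimensional ℝ g]
    (br : Module.Dual ℝ g →ₗ[ℝ] Module.Dual ℝ g →ₗ[ℝ] Module.Dual ℝ g)
    (br_alt : ∀ α : Module.Dual ℝ g, br α α = 0)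
    (br_jacobi : ∀ α β γ : Module.Dual ℝ g,
      br (br α β) γ + br (br β γ) α + br (br γ α) β = 0)
    (δ : g →ₗ[ℝ] g ⊗[ℝ] g)
    (hδ : ∀ (X : g) (α β : Module.Dual ℝ g),
      TensorProduct.lid ℝ ℝ (TensorProduct.map α β (δ X)) = br α β X)
    (cocycle : ∀ X Y : g,
      δ ⁅X, Y⁆ =
        (TensorProduct.map (LieAlgebra.ad ℝ g X : g →ₗ[ℝ] g) (LinearMap.id : g →ₗ[ℝ] g)
            + TensorProduct.map (LinearMap.id : g →ₗ[ℝ] g)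
              (LieAlgebra.ad ℝ g X : g →ₗ[ℝ] g)) (δ Y)
          - (TensorProduct.map (LieAlgebra.ad ℝ g Y : g →ₗ[ℝ] g) (LinearMap.id : g →ₗ[ℝ] g)
            + TensorProduct.map (LinearMap.id : g →ₗ[ℝ] g)
              (LieAlgebra.ad ℝ g Y : g →ₗ[ℝ] g)) (δ X))
    (a : Module.Dual ℝ g →ₗ[ℝ] g →ₗ[ℝ] g)
    (ha : ∀ (α : Module.Dual ℝ g) (X : g) (β : Module.Dual ℝ g),
      β (a α X) = br α β X)
    -- the double bracket, as a bilinear map on `D(g) = g × g*`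
    (Dbr : (g × Module.Dual ℝ g) →ₗ[ℝ] (g × Module.Dual ℝ g) →ₗ[ℝ] (g × Module.Dual ℝ g))
    (hDbr : ∀ (X Y : g) (α β : Module.Dual ℝ g),
      Dbr (X, α) (Y, β) =
        (⁅X, Y⁆ + a β X - a α Y,
          br α β + α ∘ₗ (LieAlgebra.ad ℝ g Y : g →ₗ[ℝ] g)
            - β ∘ₗ (LieAlgebra.ad ℝ g X : g →ₗ[ℝ] g)))
    -- a basis of `g` and the canonical r-matrix of the double
    (ι : Type*) [Fintype ι] [DecidableEq ι] (e : Module.Basis ι ℝ g)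
    (r : (g × Module.Dual ℝ g) ⊗[ℝ] (g × Module.Dual ℝ g))
    (hr : r = ∑ i : ι, (((0 : g), e.dualBasis i) : g × Module.Dual ℝ g)
        ⊗ₜ[ℝ] ((e i, (0 : Module.Dual ℝ g)) : g × Module.Dual ℝ g))
    -- the dual cocommutator `δ'(α)(X⊗Y) = α([X,Y])`
    (δ' : Module.Dual ℝ g →ₗ[ℝ] Module.Dual ℝ g ⊗[ℝ] Module.Dual ℝ g)
    (hδ' : ∀ (α : Module.Dual ℝ g) (X Y : g),
      TensorProduct.lid ℝ ℝ (TensorProduct.map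
        (Module.Dual.eval ℝ g X) (Module.Dual.eval ℝ g Y) (δ' α)) = α ⁅X, Y⁆) :
    -- δ_D on `g × {0}` is `−(j⊗j)∘δ`
    (∀ X : g,
      (TensorProduct.map (Dbr (X, (0 : Module.Dual ℝ g)))
          (LinearMap.id : (g × Module.Dual ℝ g) →ₗ[ℝ] (g × Module.Dual ℝ g))
        + TensorProduct.map (LinearMap.id : (g × Module.Dual ℝ g) →ₗ[ℝ] (g × Module.Dual ℝ g))
          (Dbr (X, (0 : Module.Dual ℝ g)))) r
      = -(TensorProduct.map (LinearMap.inl ℝ g (Module.Dual ℝ g))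
          (LinearMap.inl ℝ g (Module.Dual ℝ g)) (δ X)))
    ∧
    -- δ_D on `{0} × g*` is `(j'⊗j')∘δ'`
    (∀ α : Module.Dual ℝ g,
      (TensorProduct.map (Dbr ((0 : g), α))
          (LinearMap.id : (g × Module.Dual ℝ g) →ₗ[ℝ] (g × Module.Dual ℝ g))
        + TensorProduct.map (LinearMap.id : (g × Module.Dual ℝ g) →ₗ[ℝ] (g × Module.Dual ℝ g))
          (Dbr ((0 : g), α))) r
      = TensorProduct.map (LinearMap.inr ℝ g (Module.Dual ℝ g))
          (LinearMap.inr ℝ g (Module.Dual ℝ g)) (δ' α))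
    ∧
    -- in particular, `δ_D` maps `g×{0}` into `(g×{0})⊗(g×{0})`
    (∀ X : g,
      (TensorProduct.map (Dbr (X, (0 : Module.Dual ℝ g)))
          (LinearMap.id : (g × Module.Dual ℝ g) →ₗ[ℝ] (g × Module.Dual ℝ g))
        + TensorProduct.map (LinearMap.id : (g × Module.Dual ℝ g) →ₗ[ℝ] (g × Module.Dual ℝ g))
          (Dbr (X, (0 : Module.Dual ℝ g)))) r
      ∈ LinearMap.range (TensorProduct.map (LinearMap.inl ℝ g (Module.Dual ℝ g))
          (LinearMap.inl ℝ g (Module.Dual ℝ g))))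
    ∧
    -- and `{0}×g*` into `({0}×g*)⊗({0}×g*)`
    (∀ α : Module.Dual ℝ g,
      (TensorProduct.map (Dbr ((0 : g), α))
          (LinearMap.id : (g × Module.Dual ℝ g) →ₗ[ℝ] (g × Module.Dual ℝ g))
        + TensorProduct.map (LinearMap.id : (g × Module.Dual ℝ g) →ₗ[ℝ] (g × Module.Dual ℝ g))
          (Dbr ((0 : g), α))) r
      ∈ LinearMap.range (TensorProduct.map (LinearMap.inr ℝ g (Module.Dual ℝ g))
          (LinearMap.inr ℝ g (Module.Dual ℝ g)))) := by
  have br_skew : ∀ α β : Module.Dual ℝ g, br α β = - br β α := by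
    intro α β
    have h := br_alt (α + β)
    simp only [map_add, LinearMap.add_apply, br_alt, zero_add, add_zero] at h
    linear_combination (norm := abel) h
  have hεc : ∀ i, e.dualBasis i = e.coord i := fun i => congrFun e.coe_dualBasis i
  have hdc : ∀ j, e.dualBasis.coord j = Module.Dual.eval ℝ g (e j) := by
    intro j; ext l; simp [Module.Basis.coord_apply, Module.Basis.dualBasis_repr]
  have key1 : ∀ X : g, (∑ i, (a (e.dualBasis i) X) ⊗ₜ[ℝ] e i) = - δ X := by
    intro X
    rw [eq_neg_iff_add_eq_zero]
    apply tensor_coord_ext e e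
    intro j k
    simp only [map_add, map_sum, map_zero, TensorProduct.map_tmul, TensorProduct.lid_tmul,
      smul_eq_mul, Module.Basis.coord_apply, Module.Basis.repr_self, Finsupp.single_apply, mul_ite, mul_one,
      mul_zero, Finset.sum_ite_eq', Finset.mem_univ, if_true, hδ]
    rw [show ((e.repr (a (e.dualBasis k) X)) j) = (e.coord j) (a (e.dualBasis k) X) from rfl,
      ha, hεc, br_skew]
    simp
  have key2 : ∀ X : g,
      (∑ i, (e.dualBasis i ∘ₗ (LieAlgebra.ad ℝ g X : g →ₗ[ℝ] g)) ⊗ₜ[ℝ] e i)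
        = ∑ i, e.dualBasis i ⊗ₜ[ℝ] ⁅X, e i⁆ := by
    intro X
    apply tensor_coord_ext e.dualBasis e
    intro j k
    simp [hdc, Module.Basis.coord_apply, Module.Basis.repr_self, Finsupp.single_apply,
      LieAlgebra.ad_apply, Finset.sum_ite_eq, Finset.sum_ite_eq']
  have key3 : ∀ α : Module.Dual ℝ g,
      (∑ i, (br α (e.dualBasis i)) ⊗ₜ[ℝ] e i) = ∑ i, (e.dualBasis i) ⊗ₜ[ℝ] (a α (e i)) := by
    intro α
    apply tensor_coord_ext e.dualBasis e
    intro j k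
    simp only [map_sum, TensorProduct.map_tmul, TensorProduct.lid_tmul, smul_eq_mul, hdc,
      Module.Basis.coord_apply, Module.Basis.repr_self, Finsupp.single_apply, mul_ite, ite_mul, mul_one,
      mul_zero, one_mul, zero_mul, Module.Basis.dualBasis_apply_self, Finset.sum_ite_eq,
      Finset.sum_ite_eq', Finset.mem_univ, if_true, Module.Dual.eval_apply]
    rw [show ((e.repr (a α (e j))) k) = (e.coord k) (a α (e j)) from rfl, ha, hεc]
  have key4 : ∀ α : Module.Dual ℝ g,
      (∑ i, (e.dualBasis i) ⊗ₜ[ℝ] (α ∘ₗ (LieAlgebra.ad ℝ g (e i) : g →ₗ[ℝ] g))) = δ' α := by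
    intro α
    apply tensor_coord_ext e.dualBasis e.dualBasis
    intro j k
    simp only [map_sum, TensorProduct.map_tmul, TensorProduct.lid_tmul, smul_eq_mul, hdc,
      Module.Dual.eval_apply, LinearMap.comp_apply, LieAlgebra.ad_apply,
      Module.Basis.dualBasis_apply_self, ite_mul, one_mul, zero_mul, Finset.sum_ite_eq,
      Finset.mem_univ, if_true, hδ']
  -- main computation on g × {0}
  have h1 : ∀ X : g,
      (TensorProduct.map (Dbr (X, (0 : Module.Dual ℝ g)))
          (LinearMap.id : (g × Module.Dual ℝ g) →ₗ[ℝ] (g × Module.Dual ℝ g))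
        + TensorProduct.map (LinearMap.id : (g × Module.Dual ℝ g) →ₗ[ℝ] (g × Module.Dual ℝ g))
          (Dbr (X, (0 : Module.Dual ℝ g)))) r
      = -(TensorProduct.map (LinearMap.inl ℝ g (Module.Dual ℝ g))
          (LinearMap.inl ℝ g (Module.Dual ℝ g)) (δ X)) := by
    intro X
    have d1 : ∀ i, Dbr (X, (0 : Module.Dual ℝ g)) ((0 : g), e.dualBasis i)
        = ((a (e.dualBasis i) X, (0 : Module.Dual ℝ g)) : g × Module.Dual ℝ g)
          + ((0 : g), -(e.dualBasis i ∘ₗ (LieAlgebra.ad ℝ g X : g →ₗ[ℝ] g))) := by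
      intro i
      rw [hDbr]
      simp [Prod.ext_iff]
    have d2 : ∀ i, Dbr (X, (0 : Module.Dual ℝ g)) (e i, (0 : Module.Dual ℝ g))
        = ((⁅X, e i⁆, (0 : Module.Dual ℝ g)) : g × Module.Dual ℝ g) := by
      intro i
      rw [hDbr]
      simp [Prod.ext_iff]
    have hA : (∑ i, ((a (e.dualBasis i) X, (0 : Module.Dual ℝ g)) : g × Module.Dual ℝ g)
          ⊗ₜ[ℝ] ((e i, (0 : Module.Dual ℝ g)) : g × Module.Dual ℝ g))
        = -(TensorProduct.map (LinearMap.inl ℝ g (Module.Dual ℝ g))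
          (LinearMap.inl ℝ g (Module.Dual ℝ g)) (δ X)) := by
      have h := congrArg (TensorProduct.map (LinearMap.inl ℝ g (Module.Dual ℝ g))
        (LinearMap.inl ℝ g (Module.Dual ℝ g))) (key1 X)
      simpa only [map_sum, map_neg, TensorProduct.map_tmul, LinearMap.inl_apply] using h
    have hBC : (∑ i, (((0 : g), -(e.dualBasis i ∘ₗ (LieAlgebra.ad ℝ g X : g →ₗ[ℝ] g)))
            : g × Module.Dual ℝ g) ⊗ₜ[ℝ] ((e i, (0 : Module.Dual ℝ g)) : g × Module.Dual ℝ g))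
        + (∑ i, (((0 : g), e.dualBasis i) : g × Module.Dual ℝ g)
            ⊗ₜ[ℝ] ((⁅X, e i⁆, (0 : Module.Dual ℝ g)) : g × Module.Dual ℝ g)) = 0 := by
      have h := congrArg (TensorProduct.map (LinearMap.inr ℝ g (Module.Dual ℝ g))
        (LinearMap.inl ℝ g (Module.Dual ℝ g))) (key2 X)
      simp only [map_sum, TensorProduct.map_tmul, LinearMap.inr_apply, LinearMap.inl_apply] at h
      have hneg : ∀ i, ((((0 : g), -(e.dualBasis i ∘ₗ (LieAlgebra.ad ℝ g X : g →ₗ[ℝ] g)))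
            : g × Module.Dual ℝ g) ⊗ₜ[ℝ] ((e i, (0 : Module.Dual ℝ g)) : g × Module.Dual ℝ g))
          = -((((0 : g), e.dualBasis i ∘ₗ (LieAlgebra.ad ℝ g X : g →ₗ[ℝ] g))
            : g × Module.Dual ℝ g) ⊗ₜ[ℝ] ((e i, (0 : Module.Dual ℝ g)) : g × Module.Dual ℝ g)) := by
        intro i
        rw [← TensorProduct.neg_tmul, Prod.neg_mk, neg_zero]
      simp only [hneg]
      rw [← h, ← Finset.sum_add_distrib]
      refine Finset.sum_eq_zero fun i _ => ?_
      abel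
    rw [hr]
    simp only [LinearMap.add_apply, map_sum, TensorProduct.map_tmul, LinearMap.id_coe, id_eq,
      d1, d2, TensorProduct.add_tmul, Finset.sum_add_distrib]
    rw [add_assoc, hBC, add_zero, hA]
  -- main computation on {0} × g*
  have h2 : ∀ α : Module.Dual ℝ g,
      (TensorProduct.map (Dbr ((0 : g), α))
          (LinearMap.id : (g × Module.Dual ℝ g) →ₗ[ℝ] (g × Module.Dual ℝ g))
        + TensorProduct.map (LinearMap.id : (g × Module.Dual ℝ g) →ₗ[ℝ] (g × Module.Dual ℝ g))
          (Dbr ((0 : g), α))) r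
      = TensorProduct.map (LinearMap.inr ℝ g (Module.Dual ℝ g))
          (LinearMap.inr ℝ g (Module.Dual ℝ g)) (δ' α) := by
    intro α
    have d3 : ∀ i, Dbr ((0 : g), α) ((0 : g), e.dualBasis i)
        = (((0 : g), br α (e.dualBasis i)) : g × Module.Dual ℝ g) := by
      intro i
      rw [hDbr]
      simp [Prod.ext_iff]
    have d4 : ∀ i, Dbr ((0 : g), α) (e i, (0 : Module.Dual ℝ g))
        = ((-(a α (e i)), (0 : Module.Dual ℝ g)) : g × Module.Dual ℝ g)
          + (((0 : g), α ∘ₗ (LieAlgebra.ad ℝ g (e i) : g →ₗ[ℝ] g)) : g × Module.Dual ℝ g) := by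
      intro i
      rw [hDbr]
      simp [Prod.ext_iff]
    have hAB : (∑ i, (((0 : g), br α (e.dualBasis i)) : g × Module.Dual ℝ g)
            ⊗ₜ[ℝ] ((e i, (0 : Module.Dual ℝ g)) : g × Module.Dual ℝ g))
        + (∑ i, (((0 : g), e.dualBasis i) : g × Module.Dual ℝ g)
            ⊗ₜ[ℝ] ((-(a α (e i)), (0 : Module.Dual ℝ g)) : g × Module.Dual ℝ g)) = 0 := by
      have h := congrArg (TensorProduct.map (LinearMap.inr ℝ g (Module.Dual ℝ g))
        (LinearMap.inl ℝ g (Module.Dual ℝ g))) (key3 α)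
      simp only [map_sum, TensorProduct.map_tmul, LinearMap.inr_apply, LinearMap.inl_apply] at h
      have hneg : ∀ i, ((((0 : g), e.dualBasis i) : g × Module.Dual ℝ g)
            ⊗ₜ[ℝ] ((-(a α (e i)), (0 : Module.Dual ℝ g)) : g × Module.Dual ℝ g))
          = -((((0 : g), e.dualBasis i) : g × Module.Dual ℝ g)
            ⊗ₜ[ℝ] ((a α (e i), (0 : Module.Dual ℝ g)) : g × Module.Dual ℝ g)) := by
        intro i
        rw [← TensorProduct.tmul_neg, Prod.neg_mk, neg_zero]
      simp only [hneg, h]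
      rw [← Finset.sum_add_distrib]
      refine Finset.sum_eq_zero fun i _ => ?_
      abel
    have hC : (∑ i, (((0 : g), e.dualBasis i) : g × Module.Dual ℝ g)
            ⊗ₜ[ℝ] (((0 : g), α ∘ₗ (LieAlgebra.ad ℝ g (e i) : g →ₗ[ℝ] g)) : g × Module.Dual ℝ g))
        = TensorProduct.map (LinearMap.inr ℝ g (Module.Dual ℝ g))
          (LinearMap.inr ℝ g (Module.Dual ℝ g)) (δ' α) := by
      have h := congrArg (TensorProduct.map (LinearMap.inr ℝ g (Module.Dual ℝ g))
        (LinearMap.inr ℝ g (Module.Dual ℝ g))) (key4 α)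
      simpa only [map_sum, TensorProduct.map_tmul, LinearMap.inr_apply] using h
    rw [hr]
    simp only [LinearMap.add_apply, map_sum, TensorProduct.map_tmul, LinearMap.id_coe, id_eq,
      d3, d4, TensorProduct.tmul_add, Finset.sum_add_distrib]
    rw [← add_assoc, hAB, zero_add, hC]
  refine ⟨h1, h2, fun X => ⟨-δ X, by rw [map_neg, h1]⟩, fun α => ⟨δ' α, (h2 α).symm⟩⟩
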